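/- Let $\varphi$ be a Schwartz function on $\mathbb{R}^d$ and $N > d$ an integer with $|\check\varphi(x)| \le C(1+|x|)^{-N}$. Let $\ell, k$ be positive integers with $|\ell - k| \ge 8$, $n \ge \max(\ell,k)$, $e = (1,0,\dots,0)$, and let $\psi$ be Schwartz with $|\psi(y)| \le C(1+|y|)^{-2N}$. Then $\sup_{x: |2^\ell(x - 2^{2n+\ell}e)| \le 1} \left| \int_{\mathbb{R}^d} \check\varphi(2^\ell(x-y))\, \psi(2^k(y - 2^{2n+k}e))\, dy \right| \le C\left( 2^{-2d\ell} 2^{-2(k+2n)N} + 2^{-(\ell+2n)N}2^{-2dk} \right) \cdot 2^{d\max(\ell,k)}$ up to constants depending only on $d, N$. -/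

import Mathlib

open MeasureTheory

set_option maxHeartbeats 1000000

private lemma rpow2_mono {a b : ℝ} (h : a ≤ b) : (2:ℝ) ^ a ≤ (2:ℝ) ^ b :=
  Real.rpow_le_rpow_of_exponent_le one_le_two h

private lemma two_pow_sub_ge (a b : ℕ) (h : b + 8 ≤ a) :
    (2:ℝ) ^ (a - 1) ≤ (2:ℝ) ^ a - (2:ℝ) ^ b := by
  have h1 : (2:ℝ) ^ b ≤ (2:ℝ) ^ (a - 1) := pow_le_pow_right₀ one_le_two (by omega)
  have h2 : (2:ℝ) ^ a = (2:ℝ) ^ (a - 1) * 2 := by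
    rw [← pow_succ]; congr 1; omega
  linarith

/-- Cross-term smallness estimate: there is `C` depending only on `d, N` such that whenever
`|ǧ(x)| ≤ C₁(1+|x|)^{-N}`, `|ψ(y)| ≤ C₂(1+|y|)^{-2N}`, `ℓ, k ≥ 1` with `|ℓ-k| ≥ 8` and
`n ≥ max(ℓ,k)`, one has, for all `x` with `|2^ℓ(x - 2^{2n+ℓ}e)| ≤ 1`,
`|∫ ǧ(2^ℓ(x-y)) ψ(2^k(y - 2^{2n+k}e)) dy|
  ≤ C C₁ C₂ (2^{-2dℓ} 2^{-2(k+2n)N} + 2^{-(ℓ+2n)N} 2^{-2dk}) 2^{d max(ℓ,k)}`. -/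
theorem cross_term_estimate (d N : ℕ) (hd : 1 ≤ d) (hN : d < N) :
    ∃ C : ℝ, 0 < C ∧
      ∀ (C₁ C₂ : ℝ), 0 < C₁ → 0 < C₂ →
      ∀ (g ψ : EuclideanSpace ℝ (Fin d) → ℂ),
        Continuous g → Continuous ψ →
        (∀ x, ‖g x‖ ≤ C₁ * (1 + ‖x‖) ^ (-(N : ℝ))) →
        (∀ y, ‖ψ y‖ ≤ C₂ * (1 + ‖y‖) ^ (-(2 * N : ℝ))) →
      ∀ (ℓ k n : ℕ), 1 ≤ ℓ → 1 ≤ k → (ℓ + 8 ≤ k ∨ k + 8 ≤ ℓ) → max ℓ k ≤ n →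
      ∀ e : EuclideanSpace ℝ (Fin d), e = EuclideanSpace.single ⟨0, hd⟩ 1 →
      ∀ x : EuclideanSpace ℝ (Fin d),
        ‖(2 : ℝ) ^ ℓ • (x - (2 : ℝ) ^ (2 * n + ℓ) • e)‖ ≤ 1 →
        ‖∫ y : EuclideanSpace ℝ (Fin d),
            g ((2 : ℝ) ^ ℓ • (x - y)) * ψ ((2 : ℝ) ^ k • (y - (2 : ℝ) ^ (2 * n + k) • e))‖
          ≤ C * C₁ * C₂ *
            ((2 : ℝ) ^ (-(2 * (d : ℤ) * ℓ)) * (2 : ℝ) ^ (-(2 * ((k : ℤ) + 2 * n) * N))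
              + (2 : ℝ) ^ (-(((ℓ : ℤ) + 2 * n) * N)) * (2 : ℝ) ^ (-(2 * (d : ℤ) * k)))
            * (2 : ℝ) ^ ((d : ℤ) * max ℓ k) := by
  have hdim : Module.finrank ℝ (EuclideanSpace ℝ (Fin d)) = d := finrank_euclideanSpace_fin
  have hNd : (d : ℝ) < (N : ℝ) := by exact_mod_cast hN
  have hN1 : (1 : ℝ) ≤ (N : ℝ) := by
    have : (1:ℕ) ≤ N := by omega
    exact_mod_cast this
  have hJint : Integrable (fun z : EuclideanSpace ℝ (Fin d) => (1 + ‖z‖) ^ (-(N:ℝ))) := by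
    apply integrable_one_add_norm
    rw [hdim]; exact hNd
  have hJψint : Integrable (fun z : EuclideanSpace ℝ (Fin d) => (1 + ‖z‖) ^ (-(2*N:ℝ))) := by
    apply integrable_one_add_norm
    rw [hdim]; linarith
  set I : ℝ := ∫ z : EuclideanSpace ℝ (Fin d), (1 + ‖z‖) ^ (-(N:ℝ)) with hIdef
  have hI0 : 0 ≤ I := integral_nonneg fun z => Real.rpow_nonneg (by positivity) _
  refine ⟨(I + 1) * 2 ^ (4 * N), by positivity, ?_⟩
  intro C₁ C₂ hC₁ hC₂ g ψ hgc hψc hg hψ ℓ k n hℓ1 hk1 hlk hn e he x hx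
  set m := max ℓ k with hm
  have hℓm : ℓ ≤ m := le_max_left _ _
  have hkm : k ≤ m := le_max_right _ _
  have hm9 : 9 ≤ m := by rcases hlk with h | h <;> omega
  have hnm : m ≤ n := hn
  have hene : ‖e‖ = 1 := by rw [he, EuclideanSpace.norm_single]; norm_num
  set c₁ : EuclideanSpace ℝ (Fin d) := (2:ℝ) ^ (2*n+ℓ) • e with hc₁
  set c₂ : EuclideanSpace ℝ (Fin d) := (2:ℝ) ^ (2*n+k) • e with hc₂
  have h2ℓ : (0:ℝ) < 2 ^ ℓ := by positivity
  have h2k : (0:ℝ) < 2 ^ k := by positivity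
  -- distance from x to c₁
  have hxc : ‖x - c₁‖ ≤ 1/2 := by
    rw [norm_smul, Real.norm_eq_abs, abs_of_pos h2ℓ] at hx
    have h2 : (2:ℝ) ≤ 2 ^ ℓ := by
      calc (2:ℝ) = 2 ^ 1 := (pow_one 2).symm
      _ ≤ 2 ^ ℓ := pow_le_pow_right₀ one_le_two hℓ1
    nlinarith [norm_nonneg (x - c₁)]
  -- distance between centers
  have hc12 : (2:ℝ) ^ (2*n+m-1) ≤ ‖c₁ - c₂‖ := by
    have heq : c₁ - c₂ = ((2:ℝ) ^ (2*n+ℓ) - (2:ℝ) ^ (2*n+k)) • e := by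
      rw [hc₁, hc₂, sub_smul]
    rw [heq, norm_smul, hene, mul_one, Real.norm_eq_abs]
    rcases hlk with h | h
    · have hmk : m = k := by omega
      have h1 : (2:ℝ) ^ (2*n+k-1) ≤ (2:ℝ) ^ (2*n+k) - (2:ℝ) ^ (2*n+ℓ) :=
        two_pow_sub_ge _ _ (by omega)
      have h2 : (2:ℝ) ^ (2*n+k) - (2:ℝ) ^ (2*n+ℓ) ≤ |(2:ℝ) ^ (2*n+ℓ) - (2:ℝ) ^ (2*n+k)| := by
        rw [abs_sub_comm]; exact le_abs_self _
      have h3 : 2*n+m-1 = 2*n+k-1 := by omega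
      rw [h3]; linarith
    · have hmk : m = ℓ := by omega
      have h1 : (2:ℝ) ^ (2*n+ℓ-1) ≤ (2:ℝ) ^ (2*n+ℓ) - (2:ℝ) ^ (2*n+k) :=
        two_pow_sub_ge _ _ (by omega)
      have h2 : (2:ℝ) ^ (2*n+ℓ) - (2:ℝ) ^ (2*n+k) ≤ |(2:ℝ) ^ (2*n+ℓ) - (2:ℝ) ^ (2*n+k)| :=
        le_abs_self _
      have h3 : 2*n+m-1 = 2*n+ℓ-1 := by omega
      rw [h3]; linarith
  -- the integrand
  set F : EuclideanSpace ℝ (Fin d) → ℂ :=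
    fun y => g ((2:ℝ) ^ ℓ • (x - y)) * ψ ((2:ℝ) ^ k • (y - c₂)) with hF
  -- integrable comparison functions
  have hJg : Integrable (fun y : EuclideanSpace ℝ (Fin d) =>
      (1 + ‖(2:ℝ) ^ ℓ • (x - y)‖) ^ (-(N:ℝ))) := by
    have h1 : Integrable (fun z : EuclideanSpace ℝ (Fin d) =>
        (1 + ‖(2:ℝ) ^ ℓ • z‖) ^ (-(N:ℝ))) := hJint.comp_smul (ne_of_gt h2ℓ)
    exact h1.comp_sub_left x
  have hJψ : Integrable (fun y : EuclideanSpace ℝ (Fin d) =>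
      (1 + ‖(2:ℝ) ^ k • (y - c₂)‖) ^ (-(2*N:ℝ))) := by
    have h1 : Integrable (fun z : EuclideanSpace ℝ (Fin d) =>
        (1 + ‖(2:ℝ) ^ k • z‖) ^ (-(2*N:ℝ))) := hJψint.comp_smul (ne_of_gt h2k)
    exact h1.comp_sub_right c₂
  -- integrability of F
  have hFmeas : AEStronglyMeasurable F volume := by
    apply Continuous.aestronglyMeasurable
    apply Continuous.mul
    · exact hgc.comp (by fun_prop)
    · exact hψc.comp (by fun_prop)
  have hψle : ∀ z : EuclideanSpace ℝ (Fin d), ‖ψ z‖ ≤ C₂ := by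
    intro z
    refine (hψ z).trans ?_
    have h1 : (1 + ‖z‖) ^ (-(2*N:ℝ)) ≤ 1 := by
      apply Real.rpow_le_one_of_one_le_of_nonpos (by linarith [norm_nonneg z])
      simp only [neg_nonpos]; positivity
    nlinarith
  have hFbound : ∀ y, ‖F y‖ ≤ (C₁ * C₂) * (1 + ‖(2:ℝ) ^ ℓ • (x - y)‖) ^ (-(N:ℝ)) := by
    intro y
    rw [hF]
    simp only [norm_mul]
    calc ‖g ((2:ℝ) ^ ℓ • (x - y))‖ * ‖ψ ((2:ℝ) ^ k • (y - c₂))‖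
        ≤ (C₁ * (1 + ‖(2:ℝ) ^ ℓ • (x - y)‖) ^ (-(N:ℝ))) * C₂ :=
          mul_le_mul (hg _) (hψle _) (norm_nonneg _) (by positivity)
      _ = (C₁ * C₂) * (1 + ‖(2:ℝ) ^ ℓ • (x - y)‖) ^ (-(N:ℝ)) := by ring
  have hFint : Integrable F :=
    Integrable.mono' (hJg.const_mul (C₁ * C₂)) hFmeas (Filter.Eventually.of_forall hFbound)
  -- the two integral computations
  have hIg : (∫ y : EuclideanSpace ℝ (Fin d), (1 + ‖(2:ℝ) ^ ℓ • (x - y)‖) ^ (-(N:ℝ)))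
      = ((2:ℝ) ^ (ℓ*d))⁻¹ * I := by
    have h1 : (∫ y : EuclideanSpace ℝ (Fin d), (1 + ‖(2:ℝ) ^ ℓ • (x - y)‖) ^ (-(N:ℝ)))
        = ∫ z : EuclideanSpace ℝ (Fin d), (1 + ‖(2:ℝ) ^ ℓ • z‖) ^ (-(N:ℝ)) :=
      integral_sub_left_eq_self (fun z => (1 + ‖(2:ℝ) ^ ℓ • z‖) ^ (-(N:ℝ))) volume x
    rw [h1, Measure.integral_comp_smul volume (fun z => (1 + ‖z‖) ^ (-(N:ℝ))) ((2:ℝ) ^ ℓ),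
      hdim, smul_eq_mul, abs_of_pos (by positivity), ← pow_mul]
  have hIψ : (∫ y : EuclideanSpace ℝ (Fin d), (1 + ‖(2:ℝ) ^ k • (y - c₂)‖) ^ (-(2*N:ℝ)))
      ≤ ((2:ℝ) ^ (k*d))⁻¹ * I := by
    have h1 : (∫ y : EuclideanSpace ℝ (Fin d), (1 + ‖(2:ℝ) ^ k • (y - c₂)‖) ^ (-(2*N:ℝ)))
        = ∫ z : EuclideanSpace ℝ (Fin d), (1 + ‖(2:ℝ) ^ k • z‖) ^ (-(2*N:ℝ)) :=
      integral_sub_right_eq_self (fun z => (1 + ‖(2:ℝ) ^ k • z‖) ^ (-(2*N:ℝ))) c₂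
    rw [h1, Measure.integral_comp_smul volume (fun z => (1 + ‖z‖) ^ (-(2*N:ℝ))) ((2:ℝ) ^ k),
      hdim, smul_eq_mul, abs_of_pos (by positivity), ← pow_mul]
    have h2 : (∫ z : EuclideanSpace ℝ (Fin d), (1 + ‖z‖) ^ (-(2*N:ℝ))) ≤ I := by
      apply integral_mono hJψint hJint
      intro z
      apply Real.rpow_le_rpow_of_exponent_le (by linarith [norm_nonneg z])
      have : (0:ℝ) ≤ (N:ℝ) := by positivity
      linarith
    have h3 : (0:ℝ) ≤ ((2:ℝ) ^ (k*d))⁻¹ := by positivity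
    exact mul_le_mul_of_nonneg_left h2 h3
  -- the splitting set
  set A : Set (EuclideanSpace ℝ (Fin d)) := Metric.closedBall c₁ ((2:ℝ) ^ (2*n)) with hAdef
  have hAm : MeasurableSet A := measurableSet_closedBall
  -- constants
  set M₁ : ℝ := ((2:ℝ) ^ (k+2*n+m-2)) ^ (-(2*N:ℝ)) with hM₁
  set M₂ : ℝ := ((2:ℝ) ^ (ℓ+2*n-1)) ^ (-(N:ℝ)) with hM₂
  have hM₁0 : 0 ≤ M₁ := Real.rpow_nonneg (by positivity) _
  have hM₂0 : 0 ≤ M₂ := Real.rpow_nonneg (by positivity) _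
  -- bound on A
  have hA_bound : (∫ y in A, ‖F y‖) ≤ (C₁ * C₂ * M₁) * (((2:ℝ) ^ (ℓ*d))⁻¹ * I) := by
    have hmono : (∫ y in A, ‖F y‖)
        ≤ ∫ y in A, (C₁ * C₂ * M₁) * (1 + ‖(2:ℝ) ^ ℓ • (x - y)‖) ^ (-(N:ℝ)) := by
      apply setIntegral_mono_on hFint.norm.integrableOn
        ((hJg.const_mul (C₁ * C₂ * M₁)).integrableOn) hAm
      intro y hy
      have hyc : ‖y - c₁‖ ≤ (2:ℝ) ^ (2*n) := by
        rwa [hAdef, Metric.mem_closedBall, dist_eq_norm] at hy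
      have h1 : (2:ℝ) ^ (2*n+m-2) ≤ ‖y - c₂‖ := by
        have t1 : ‖c₁ - c₂‖ ≤ ‖y - c₁‖ + ‖y - c₂‖ := by
          calc ‖c₁ - c₂‖ = ‖(c₁ - y) + (y - c₂)‖ := by rw [sub_add_sub_cancel]
            _ ≤ ‖c₁ - y‖ + ‖y - c₂‖ := norm_add_le _ _
            _ = ‖y - c₁‖ + ‖y - c₂‖ := by rw [norm_sub_rev]
        have t3 : (2:ℝ) ^ (2*n+m-1) = (2:ℝ) ^ (2*n+m-2) * 2 := by
          rw [← pow_succ]; congr 1; omega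
        have t4 : (2:ℝ) ^ (2*n) ≤ (2:ℝ) ^ (2*n+m-2) := pow_le_pow_right₀ one_le_two (by omega)
        linarith [hc12]
      have h2 : (2:ℝ) ^ (k+2*n+m-2) ≤ ‖(2:ℝ) ^ k • (y - c₂)‖ := by
        rw [norm_smul, Real.norm_eq_abs, abs_of_pos h2k]
        have he1 : (2:ℝ) ^ (k+2*n+m-2) = (2:ℝ) ^ k * (2:ℝ) ^ (2*n+m-2) := by
          rw [← pow_add]; congr 1; omega
        rw [he1]
        exact mul_le_mul_of_nonneg_left h1 (le_of_lt h2k)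
      have hψb : ‖ψ ((2:ℝ) ^ k • (y - c₂))‖ ≤ C₂ * M₁ := by
        refine (hψ _).trans ?_
        apply mul_le_mul_of_nonneg_left _ (le_of_lt hC₂)
        rw [hM₁]
        apply Real.rpow_le_rpow_of_nonpos (by positivity)
          (h2.trans (by linarith [norm_nonneg ((2:ℝ) ^ k • (y - c₂))]))
        simp only [neg_nonpos]; positivity
      calc ‖F y‖ = ‖g ((2:ℝ) ^ ℓ • (x - y))‖ * ‖ψ ((2:ℝ) ^ k • (y - c₂))‖ := by
            rw [hF]; exact norm_mul _ _
        _ ≤ (C₁ * (1 + ‖(2:ℝ) ^ ℓ • (x - y)‖) ^ (-(N:ℝ))) * (C₂ * M₁) :=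
            mul_le_mul (hg _) hψb (norm_nonneg _) (by positivity)
        _ = (C₁ * C₂ * M₁) * (1 + ‖(2:ℝ) ^ ℓ • (x - y)‖) ^ (-(N:ℝ)) := by ring
    have hle : (∫ y in A, (C₁ * C₂ * M₁) * (1 + ‖(2:ℝ) ^ ℓ • (x - y)‖) ^ (-(N:ℝ)))
        ≤ ∫ y : EuclideanSpace ℝ (Fin d),
            (C₁ * C₂ * M₁) * (1 + ‖(2:ℝ) ^ ℓ • (x - y)‖) ^ (-(N:ℝ)) := by
      apply setIntegral_le_integral (hJg.const_mul (C₁ * C₂ * M₁))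
      apply Filter.Eventually.of_forall
      intro y
      have : (0:ℝ) ≤ (1 + ‖(2:ℝ) ^ ℓ • (x - y)‖) ^ (-(N:ℝ)) :=
        Real.rpow_nonneg (by positivity) _
      positivity
    calc (∫ y in A, ‖F y‖)
        ≤ ∫ y in A, (C₁ * C₂ * M₁) * (1 + ‖(2:ℝ) ^ ℓ • (x - y)‖) ^ (-(N:ℝ)) := hmono
      _ ≤ ∫ y : EuclideanSpace ℝ (Fin d),
            (C₁ * C₂ * M₁) * (1 + ‖(2:ℝ) ^ ℓ • (x - y)‖) ^ (-(N:ℝ)) := hle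
      _ = (C₁ * C₂ * M₁) * (((2:ℝ) ^ (ℓ*d))⁻¹ * I) := by
          rw [integral_const_mul _ _, hIg]
  -- bound on Aᶜ
  have hAc_bound : (∫ y in Aᶜ, ‖F y‖) ≤ (C₁ * C₂ * M₂) * (((2:ℝ) ^ (k*d))⁻¹ * I) := by
    have hmono : (∫ y in Aᶜ, ‖F y‖)
        ≤ ∫ y in Aᶜ, (C₁ * C₂ * M₂) * (1 + ‖(2:ℝ) ^ k • (y - c₂)‖) ^ (-(2*N:ℝ)) := by
      apply setIntegral_mono_on hFint.norm.integrableOn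
        ((hJψ.const_mul (C₁ * C₂ * M₂)).integrableOn) hAm.compl
      intro y hy
      have hyc : (2:ℝ) ^ (2*n) < ‖y - c₁‖ := by
        have : y ∉ A := hy
        rw [hAdef, Metric.mem_closedBall, dist_eq_norm, not_le] at this
        exact this
      have hxy : (2:ℝ) ^ (2*n-1) ≤ ‖x - y‖ := by
        have t1 : ‖y - c₁‖ ≤ ‖y - x‖ + ‖x - c₁‖ := by
          calc ‖y - c₁‖ = ‖(y - x) + (x - c₁)‖ := by rw [sub_add_sub_cancel]
            _ ≤ ‖y - x‖ + ‖x - c₁‖ := norm_add_le _ _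
        have t2 : ‖y - x‖ = ‖x - y‖ := norm_sub_rev _ _
        have t3 : (2:ℝ) ^ (2*n) = (2:ℝ) ^ (2*n-1) * 2 := by
          rw [← pow_succ]; congr 1; omega
        have t4 : (1:ℝ) ≤ (2:ℝ) ^ (2*n-1) := one_le_pow₀ one_le_two
        linarith
      have h2 : (2:ℝ) ^ (ℓ+2*n-1) ≤ ‖(2:ℝ) ^ ℓ • (x - y)‖ := by
        rw [norm_smul, Real.norm_eq_abs, abs_of_pos h2ℓ]
        have he1 : (2:ℝ) ^ (ℓ+2*n-1) = (2:ℝ) ^ ℓ * (2:ℝ) ^ (2*n-1) := by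
          rw [← pow_add]; congr 1; omega
        rw [he1]
        exact mul_le_mul_of_nonneg_left hxy (le_of_lt h2ℓ)
      have hgb : ‖g ((2:ℝ) ^ ℓ • (x - y))‖ ≤ C₁ * M₂ := by
        refine (hg _).trans ?_
        apply mul_le_mul_of_nonneg_left _ (le_of_lt hC₁)
        rw [hM₂]
        apply Real.rpow_le_rpow_of_nonpos (by positivity)
          (h2.trans (by linarith [norm_nonneg ((2:ℝ) ^ ℓ • (x - y))]))
        simp only [neg_nonpos]; positivity
      calc ‖F y‖ = ‖g ((2:ℝ) ^ ℓ • (x - y))‖ * ‖ψ ((2:ℝ) ^ k • (y - c₂))‖ := by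
            rw [hF]; exact norm_mul _ _
        _ ≤ (C₁ * M₂) * (C₂ * (1 + ‖(2:ℝ) ^ k • (y - c₂)‖) ^ (-(2*N:ℝ))) :=
            mul_le_mul hgb (hψ _) (norm_nonneg _) (by positivity)
        _ = (C₁ * C₂ * M₂) * (1 + ‖(2:ℝ) ^ k • (y - c₂)‖) ^ (-(2*N:ℝ)) := by ring
    have hle : (∫ y in Aᶜ, (C₁ * C₂ * M₂) * (1 + ‖(2:ℝ) ^ k • (y - c₂)‖) ^ (-(2*N:ℝ)))
        ≤ ∫ y : EuclideanSpace ℝ (Fin d),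
            (C₁ * C₂ * M₂) * (1 + ‖(2:ℝ) ^ k • (y - c₂)‖) ^ (-(2*N:ℝ)) := by
      apply setIntegral_le_integral (hJψ.const_mul (C₁ * C₂ * M₂))
      apply Filter.Eventually.of_forall
      intro y
      have : (0:ℝ) ≤ (1 + ‖(2:ℝ) ^ k • (y - c₂)‖) ^ (-(2*N:ℝ)) :=
        Real.rpow_nonneg (by positivity) _
      positivity
    calc (∫ y in Aᶜ, ‖F y‖)
        ≤ ∫ y in Aᶜ, (C₁ * C₂ * M₂) * (1 + ‖(2:ℝ) ^ k • (y - c₂)‖) ^ (-(2*N:ℝ)) := hmono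
      _ ≤ ∫ y : EuclideanSpace ℝ (Fin d),
            (C₁ * C₂ * M₂) * (1 + ‖(2:ℝ) ^ k • (y - c₂)‖) ^ (-(2*N:ℝ)) := hle
      _ ≤ (C₁ * C₂ * M₂) * (((2:ℝ) ^ (k*d))⁻¹ * I) := by
          rw [integral_const_mul _ _]
          exact mul_le_mul_of_nonneg_left hIψ (by positivity)
  -- total bound
  have htotal : ‖∫ y : EuclideanSpace ℝ (Fin d), F y‖
      ≤ (C₁ * C₂ * M₁) * (((2:ℝ) ^ (ℓ*d))⁻¹ * I)
        + (C₁ * C₂ * M₂) * (((2:ℝ) ^ (k*d))⁻¹ * I) := by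
    calc ‖∫ y : EuclideanSpace ℝ (Fin d), F y‖
        ≤ ∫ y : EuclideanSpace ℝ (Fin d), ‖F y‖ := norm_integral_le_integral_norm F
      _ = (∫ y in A, ‖F y‖) + ∫ y in Aᶜ, ‖F y‖ := (integral_add_compl hAm hFint.norm).symm
      _ ≤ _ := add_le_add hA_bound hAc_bound
  -- exponent arithmetic
  set T₁ : ℝ := (2:ℝ) ^ (-(2 * (d : ℤ) * ℓ)) * (2:ℝ) ^ (-(2 * ((k : ℤ) + 2 * n) * N)) with hT₁
  set T₂ : ℝ := (2:ℝ) ^ (-(((ℓ : ℤ) + 2 * n) * N)) * (2:ℝ) ^ (-(2 * (d : ℤ) * k)) with hT₂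
  set Tm : ℝ := (2:ℝ) ^ ((d : ℤ) * (m : ℕ)) with hTm
  have hT₁0 : 0 < T₁ := by rw [hT₁]; positivity
  have hT₂0 : 0 < T₂ := by rw [hT₂]; positivity
  have hTm0 : 0 < Tm := by rw [hTm]; positivity
  have P1 : M₁ * ((2:ℝ) ^ (ℓ*d))⁻¹ ≤ (2:ℝ) ^ (4*N) * (T₁ * Tm) := by
    have lhs_eq : M₁ * ((2:ℝ) ^ (ℓ*d))⁻¹
        = (2:ℝ) ^ (((k+2*n+m-2 : ℕ) : ℝ) * (-(2*N:ℝ)) + -((ℓ*d : ℕ) : ℝ)) := by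
      rw [Real.rpow_add two_pos, hM₁, ← Real.rpow_natCast 2 (k+2*n+m-2),
        ← Real.rpow_mul (by norm_num : (0:ℝ) ≤ 2), Real.rpow_neg (by norm_num),
        Real.rpow_natCast]
    have rhs_eq : (2:ℝ) ^ (4*N) * (T₁ * Tm)
        = (2:ℝ) ^ (((4*N : ℕ) : ℝ) + (((-(2 * (d : ℤ) * ℓ)) : ℤ) : ℝ)
            + (((-(2 * ((k : ℤ) + 2 * n) * N)) : ℤ) : ℝ) + ((((d : ℤ) * (m : ℕ)) : ℤ) : ℝ)) := by
      rw [hT₁, hTm, ← Real.rpow_natCast 2 (4*N), ← Real.rpow_intCast 2 (-(2 * (d : ℤ) * ℓ)),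
        ← Real.rpow_intCast 2 (-(2 * ((k : ℤ) + 2 * n) * N)),
        ← Real.rpow_intCast 2 ((d : ℤ) * (m : ℕ)),
        ← Real.rpow_add two_pos, ← Real.rpow_add two_pos, ← Real.rpow_add two_pos]
      ring_nf
    rw [lhs_eq, rhs_eq]
    apply rpow2_mono
    have hcast : ((k+2*n+m-2 : ℕ) : ℝ) = (k:ℝ) + 2*(n:ℝ) + (m:ℝ) - 2 := by
      rw [Nat.cast_sub (by omega)]; push_cast; ring
    rw [hcast]
    push_cast
    have hdl : (d:ℝ) * (ℓ:ℝ) ≤ (d:ℝ) * (m:ℝ) :=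
      mul_le_mul_of_nonneg_left (by exact_mod_cast hℓm) (by positivity)
    have hNm : (0:ℝ) ≤ 2 * (N:ℝ) * (m:ℝ) := by positivity
    nlinarith
  have P2 : M₂ * ((2:ℝ) ^ (k*d))⁻¹ ≤ (2:ℝ) ^ (4*N) * (T₂ * Tm) := by
    have lhs_eq : M₂ * ((2:ℝ) ^ (k*d))⁻¹
        = (2:ℝ) ^ (((ℓ+2*n-1 : ℕ) : ℝ) * (-(N:ℝ)) + -((k*d : ℕ) : ℝ)) := by
      rw [Real.rpow_add two_pos, hM₂, ← Real.rpow_natCast 2 (ℓ+2*n-1),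
        ← Real.rpow_mul (by norm_num : (0:ℝ) ≤ 2), Real.rpow_neg (by norm_num),
        Real.rpow_natCast]
    have rhs_eq : (2:ℝ) ^ (4*N) * (T₂ * Tm)
        = (2:ℝ) ^ (((4*N : ℕ) : ℝ) + (((-(((ℓ : ℤ) + 2 * n) * N)) : ℤ) : ℝ)
            + (((-(2 * (d : ℤ) * k)) : ℤ) : ℝ) + ((((d : ℤ) * (m : ℕ)) : ℤ) : ℝ)) := by
      rw [hT₂, hTm, ← Real.rpow_natCast 2 (4*N), ← Real.rpow_intCast 2 (-(((ℓ : ℤ) + 2 * n) * N)),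
        ← Real.rpow_intCast 2 (-(2 * (d : ℤ) * k)),
        ← Real.rpow_intCast 2 ((d : ℤ) * (m : ℕ)),
        ← Real.rpow_add two_pos, ← Real.rpow_add two_pos, ← Real.rpow_add two_pos]
      ring_nf
    rw [lhs_eq, rhs_eq]
    apply rpow2_mono
    have hcast : ((ℓ+2*n-1 : ℕ) : ℝ) = (ℓ:ℝ) + 2*(n:ℝ) - 1 := by
      rw [Nat.cast_sub (by omega)]; push_cast; ring
    rw [hcast]
    push_cast
    have hdk : (d:ℝ) * (k:ℝ) ≤ (d:ℝ) * (m:ℝ) :=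
      mul_le_mul_of_nonneg_left (by exact_mod_cast hkm) (by positivity)
    have hN0 : (0:ℝ) ≤ (N:ℝ) := by positivity
    nlinarith
  -- conclude
  have key : M₁ * ((2:ℝ) ^ (ℓ*d))⁻¹ * I + M₂ * ((2:ℝ) ^ (k*d))⁻¹ * I
      ≤ (I + 1) * 2 ^ (4*N) * (T₁ + T₂) * Tm := by
    have e1 : M₁ * ((2:ℝ) ^ (ℓ*d))⁻¹ * I ≤ ((2:ℝ) ^ (4*N) * (T₁ * Tm)) * (I + 1) :=
      mul_le_mul P1 (by linarith) hI0 (by positivity)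
    have e2 : M₂ * ((2:ℝ) ^ (k*d))⁻¹ * I ≤ ((2:ℝ) ^ (4*N) * (T₂ * Tm)) * (I + 1) :=
      mul_le_mul P2 (by linarith) hI0 (by positivity)
    calc M₁ * ((2:ℝ) ^ (ℓ*d))⁻¹ * I + M₂ * ((2:ℝ) ^ (k*d))⁻¹ * I
        ≤ ((2:ℝ) ^ (4*N) * (T₁ * Tm)) * (I + 1) + ((2:ℝ) ^ (4*N) * (T₂ * Tm)) * (I + 1) :=
          add_le_add e1 e2
      _ = (I + 1) * 2 ^ (4*N) * (T₁ + T₂) * Tm := by ring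
  calc ‖∫ y : EuclideanSpace ℝ (Fin d), F y‖
      ≤ (C₁ * C₂ * M₁) * (((2:ℝ) ^ (ℓ*d))⁻¹ * I)
        + (C₁ * C₂ * M₂) * (((2:ℝ) ^ (k*d))⁻¹ * I) := htotal
    _ = (C₁ * C₂) * (M₁ * ((2:ℝ) ^ (ℓ*d))⁻¹ * I + M₂ * ((2:ℝ) ^ (k*d))⁻¹ * I) := by ring
    _ ≤ (C₁ * C₂) * ((I + 1) * 2 ^ (4*N) * (T₁ + T₂) * Tm) :=
        mul_le_mul_of_nonneg_left key (by positivity)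
    _ = (I + 1) * 2 ^ (4*N) * C₁ * C₂ * (T₁ + T₂) * Tm := by ring
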